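/- Let p be an odd prime, n ≥ 1 an integer, α₁, α₂ integers coprime to p, and b an integer coprime to p. Suppose t₁, t₂ are integers such that t_i, α₁ − α₂t_i², and α₁ + α₂t_i² are all coprime to p for i = 1, 2. If b(α₁ − α₂t₁²)·(α₁ + α₂t₁²)^{-1} ≡ b(α₁ − α₂t₂²)·(α₁ + α₂t₂²)^{-1} (mod pⁿ) and 2bα₂t₁·(α₁ + α₂t₁²)^{-1} ≡ 2bα₂t₂·(α₁ + α₂t₂²)^{-1} (mod pⁿ), then t₁ ≡ t₂ (mod pⁿ). Here (·)^{-1} denotes the multiplicative inverse modulo pⁿ. -/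

import Mathlib

lemma isUnit_zmod_pow_of_not_dvd (p n : ℕ) [hp : Fact p.Prime] (a : ℤ)
    (h : ¬ (p : ℤ) ∣ a) : IsUnit ((a : ℤ) : ZMod (p ^ n)) := by
  have hcop : IsCoprime ((p : ℤ) ^ n) a :=
    (((Nat.prime_iff_prime_int.mp hp.out).coprime_iff_not_dvd.mpr h)).pow_left
  obtain ⟨u, v, huv⟩ := hcop
  have : ((u * (p:ℤ)^n + v * a : ℤ) : ZMod (p^n)) = 1 := by rw [huv]; norm_cast
  push_cast at this
  have hp0 : ((p : ZMod (p^n)))^n = 0 := by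
    have := ZMod.natCast_self (p^n)
    push_cast at this
    exact this
  rw [hp0, mul_zero, zero_add] at this
  exact IsUnit.of_mul_eq_one _ (by rw [mul_comm]; exact this)



/-- The parametrization
`t ↦ (b(α₁-α₂t²)(α₁+α₂t²)⁻¹, 2bα₂t(α₁+α₂t²)⁻¹)` is injective modulo `pⁿ` on parameters `t`
with `t`, `α₁-α₂t²`, `α₁+α₂t²` coprime to `p`. -/
theorem parametrization_injective (p : ℕ) [hp : Fact p.Prime] (hodd : Odd p)
    (n : ℕ) (hn : 1 ≤ n) (α₁ α₂ b : ℤ)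
    (h1 : ¬ (p : ℤ) ∣ α₁) (h2 : ¬ (p : ℤ) ∣ α₂) (hb : ¬ (p : ℤ) ∣ b)
    (t₁ t₂ : ℤ)
    (ht₁ : ¬ (p : ℤ) ∣ t₁) (ht₁m : ¬ (p : ℤ) ∣ (α₁ - α₂ * t₁ ^ 2))
    (ht₁p : ¬ (p : ℤ) ∣ (α₁ + α₂ * t₁ ^ 2))
    (ht₂ : ¬ (p : ℤ) ∣ t₂) (ht₂m : ¬ (p : ℤ) ∣ (α₁ - α₂ * t₂ ^ 2))
    (ht₂p : ¬ (p : ℤ) ∣ (α₁ + α₂ * t₂ ^ 2))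
    (heq1 : (b : ZMod (p ^ n)) * ((α₁ : ZMod (p ^ n)) - (α₂ : ZMod (p ^ n)) * (t₁ : ZMod (p ^ n)) ^ 2) *
        ((α₁ : ZMod (p ^ n)) + (α₂ : ZMod (p ^ n)) * (t₁ : ZMod (p ^ n)) ^ 2)⁻¹ =
      (b : ZMod (p ^ n)) * ((α₁ : ZMod (p ^ n)) - (α₂ : ZMod (p ^ n)) * (t₂ : ZMod (p ^ n)) ^ 2) *
        ((α₁ : ZMod (p ^ n)) + (α₂ : ZMod (p ^ n)) * (t₂ : ZMod (p ^ n)) ^ 2)⁻¹)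
    (heq2 : 2 * (b : ZMod (p ^ n)) * (α₂ : ZMod (p ^ n)) * (t₁ : ZMod (p ^ n)) *
        ((α₁ : ZMod (p ^ n)) + (α₂ : ZMod (p ^ n)) * (t₁ : ZMod (p ^ n)) ^ 2)⁻¹ =
      2 * (b : ZMod (p ^ n)) * (α₂ : ZMod (p ^ n)) * (t₂ : ZMod (p ^ n)) *
        ((α₁ : ZMod (p ^ n)) + (α₂ : ZMod (p ^ n)) * (t₂ : ZMod (p ^ n)) ^ 2)⁻¹) :
    (t₁ : ZMod (p ^ n)) = (t₂ : ZMod (p ^ n)) := by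
  set R := ZMod (p ^ n)
  set x1 := (t₁ : R)
  set x2 := (t₂ : R)
  set A1 : R := (α₁ : R) + (α₂ : R) * x1 ^ 2 with hA1def
  set A2 : R := (α₁ : R) + (α₂ : R) * x2 ^ 2 with hA2def
  have cast1 : ((α₁ + α₂ * t₁ ^ 2 : ℤ) : R) = A1 := by rw [Int.cast_add, Int.cast_mul, Int.cast_pow]
  have cast2 : ((α₁ + α₂ * t₂ ^ 2 : ℤ) : R) = A2 := by rw [Int.cast_add, Int.cast_mul, Int.cast_pow]
  have hA1 : IsUnit A1 := cast1 ▸ isUnit_zmod_pow_of_not_dvd p n _ ht₁p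
  have hA2 : IsUnit A2 := cast2 ▸ isUnit_zmod_pow_of_not_dvd p n _ ht₂p
  have hbu : IsUnit ((b : ℤ) : R) := isUnit_zmod_pow_of_not_dvd p n _ hb
  have h1u : IsUnit ((α₁ : ℤ) : R) := isUnit_zmod_pow_of_not_dvd p n _ h1
  have h2u : IsUnit ((α₂ : ℤ) : R) := isUnit_zmod_pow_of_not_dvd p n _ h2
  have h2pu : IsUnit (2 : R) := by
    have : ¬ (p : ℤ) ∣ (2 : ℤ) := by
      intro hd
      have hd' : p ∣ 2 := by exact_mod_cast hd
      have := (Nat.prime_dvd_prime_iff_eq hp.out Nat.prime_two).mp hd'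
      rw [this] at hodd
      exact (Nat.not_odd_iff_even.mpr (even_two)) hodd
    simpa using isUnit_zmod_pow_of_not_dvd p n (2 : ℤ) this
  have c1 : A1 * A1⁻¹ = 1 := ZMod.mul_inv_of_unit _ hA1
  have c2 : A2 * A2⁻¹ = 1 := ZMod.mul_inv_of_unit _ hA2
  have e1 : (b : R) * ((α₁ : R) - (α₂ : R) * x1 ^ 2) * A2
      = (b : R) * ((α₁ : R) - (α₂ : R) * x2 ^ 2) * A1 := by
    linear_combination (A1 * A2) * heq1
      - ((b : R) * ((α₁ : R) - (α₂ : R) * x1 ^ 2) * A2) * c1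
      + ((b : R) * ((α₁ : R) - (α₂ : R) * x2 ^ 2) * A1) * c2
  have e2 : 2 * (b : R) * (α₂ : R) * x1 * A2 = 2 * (b : R) * (α₂ : R) * x2 * A1 := by
    linear_combination (A1 * A2) * heq2
      - (2 * (b : R) * (α₂ : R) * x1 * A2) * c1
      + (2 * (b : R) * (α₂ : R) * x2 * A1) * c2
  have key : (b : R) * (2 * (α₁ : R) * (α₂ : R) * x2 ^ 2)
      = (b : R) * (2 * (α₁ : R) * (α₂ : R) * x1 ^ 2) := by
    rw [hA1def, hA2def] at e1
    linear_combination e1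
  have key2 : (2 * (α₁ : R) * (α₂ : R)) * x2 ^ 2 = (2 * (α₁ : R) * (α₂ : R)) * x1 ^ 2 := by
    have := hbu.mul_left_cancel key
    linear_combination this
  have hsq : x2 ^ 2 = x1 ^ 2 := ((h2pu.mul h1u).mul h2u).mul_left_cancel key2
  have hAeq : A2 = A1 := by rw [hA1def, hA2def, hsq]
  rw [hAeq] at e2
  have e3 : (2 * (b : R) * (α₂ : R) * A1) * x1 = (2 * (b : R) * (α₂ : R) * A1) * x2 := by
    linear_combination e2
  exact (((h2pu.mul hbu).mul h2u).mul hA1).mul_left_cancel e3
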